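/- Fix constants C, L, λ, M > 0 and choose δ̄ ∈ (0, 1) with δ̄ < 1. Let 0 < φ ≤ 1 (interpreted as ψⁿ(A) − ψ_LD(A)), let TOL(D) = δ̄λCD²/(4L(D+M)) and let p = DOWN/(DOWN + M·TOL) with DOWN(D) = D/2 evaluated at any D ∈ (0, φ]. Then (C/2)·φ − (1/λ)(TOL(φ)·L·(1+p) + L(1−p)) ≥ (C(1−δ̄)/2)·φ > 0, where 1 − p ≤ δ̄λMC/(2L + 2LM·φ^{−1}). -/

import Mathlib

/-- Key contagion inequality: with `TOL(D) = δ̄λCD²/(4L(D+M))`, `DOWN(D) = D/2` and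
`p = DOWN(D)/(DOWN(D) + M·TOL(D))` for any `D ∈ (0, φ]`, the lower bound on the payoff
gain from action 1 stays strictly positive:
`(C/2)φ − (1/λ)(TOL(φ)·L·(1+p) + L(1−p)) ≥ (C(1−δ̄)/2)φ > 0`, and moreover
`1 − p ≤ δ̄λMC/(2L + 2LM/φ)`. -/
theorem contagion_inequality
    (lam C L M δbar φ D : ℝ) (hlam : 0 < lam) (hC : 0 < C) (hL : 0 < L) (hM : 0 < M)
    (hδ0 : 0 < δbar) (hδ1 : δbar < 1)
    (hφ0 : 0 < φ) (hφ1 : φ ≤ 1) (hD0 : 0 < D) (hDφ : D ≤ φ) :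
    let TOL : ℝ → ℝ := fun x => δbar * lam * C * x ^ 2 / (4 * L * (x + M))
    let p : ℝ := (D / 2) / (D / 2 + M * TOL D)
    1 - p ≤ δbar * lam * M * C / (2 * L + 2 * L * M / φ) ∧
    (C / 2) * φ - (1 / lam) * (TOL φ * L * (1 + p) + L * (1 - p))
      ≥ (C * (1 - δbar) / 2) * φ ∧
    (C * (1 - δbar) / 2) * φ > 0 := by
  intro TOL p
  have hDM : (0:ℝ) < D + M := by linarith
  have hφM : (0:ℝ) < φ + M := by linarith
  have hTD : 0 < TOL D := by
    show 0 < δbar * lam * C * D ^ 2 / (4 * L * (D + M))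
    positivity
  have hTφ : 0 < TOL φ := by
    show 0 < δbar * lam * C * φ ^ 2 / (4 * L * (φ + M))
    positivity
  have hS : 0 < D / 2 + M * TOL D := by positivity
  have hden : 0 < 2 * L + 2 * L * M / φ := by positivity
  have h1p : 1 - p = (M * TOL D) / (D / 2 + M * TOL D) := by
    show 1 - (D / 2) / (D / 2 + M * TOL D) = _
    field_simp
    ring
  have hp1 : p ≤ 1 := by
    show (D / 2) / (D / 2 + M * TOL D) ≤ 1
    rw [div_le_one hS]
    nlinarith
  -- first part
  have hfirst : 1 - p ≤ δbar * lam * M * C / (2 * L + 2 * L * M / φ) := by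
    rw [h1p]
    rw [div_le_div_iff₀ hS hden]
    have hTDval : TOL D = δbar * lam * C * D ^ 2 / (4 * L * (D + M)) := rfl
    rw [hTDval]
    have h2 : M * (δbar * lam * C * D ^ 2 / (4 * L * (D + M))) * (2 * L + 2 * L * M / φ)
        ≤ δbar * lam * M * C * (D / 2) := by
      rw [← sub_nonneg]
      have heq : δbar * lam * M * C * (D / 2)
          - M * (δbar * lam * C * D ^ 2 / (4 * L * (D + M))) * (2 * L + 2 * L * M / φ)
          = δbar * lam * M * C * D * (M * (φ - D)) / (2 * φ * (D + M)) := by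
        field_simp
        ring
      rw [heq]
      exact div_nonneg (mul_nonneg (by positivity) (mul_nonneg hM.le (by linarith)))
        (by positivity)
    have h3 : 0 ≤ δbar * lam * M * C * (M * (δbar * lam * C * D ^ 2 / (4 * L * (D + M)))) := by
      positivity
    nlinarith [h2, h3]
  have hpos : (C * (1 - δbar) / 2) * φ > 0 := by
    have : (0:ℝ) < 1 - δbar := by linarith
    positivity
  refine ⟨hfirst, ?_, hpos⟩
  -- second part
  have hkey : (1 / lam) * (TOL φ * L * 2 + L * (δbar * lam * M * C / (2 * L + 2 * L * M / φ)))
      = δbar * C * φ / 2 := by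
    show (1 / lam) * (δbar * lam * C * φ ^ 2 / (4 * L * (φ + M)) * L * 2
        + L * (δbar * lam * M * C / (2 * L + 2 * L * M / φ))) = _
    field_simp
    ring
  have hmono : (1 / lam) * (TOL φ * L * (1 + p) + L * (1 - p))
      ≤ (1 / lam) * (TOL φ * L * 2 + L * (δbar * lam * M * C / (2 * L + 2 * L * M / φ))) := by
    have h1 : TOL φ * L * (1 + p) ≤ TOL φ * L * 2 :=
      mul_le_mul_of_nonneg_left (by linarith) (by positivity)
    have h2 : L * (1 - p) ≤ L * (δbar * lam * M * C / (2 * L + 2 * L * M / φ)) := by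
      exact mul_le_mul_of_nonneg_left hfirst hL.le
    have := add_le_add h1 h2
    have hinv : (0:ℝ) ≤ 1 / lam := by positivity
    exact mul_le_mul_of_nonneg_left this hinv
  nlinarith [hmono, hkey]
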